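/- arXiv:1511.07079 — 3 statements merged into one kernel-verified Lean document; each statement's English description precedes it below -/
import Mathlib

section
/- Let H be a real Hilbert space and U, V bounded positive operators on H. Then ‖U − V‖² ≤ ‖U² − V²‖, where ‖·‖ is the operator norm. -/
open scoped RealInnerProductSpace
open ContinuousLinearMap

variable {H : Type*} [NormedAddCommGroup H] [InnerProductSpace ℝ H] [CompleteSpace H]

lemma aux_sym (A : H →L[ℝ] H) (hA : IsSelfAdjoint A) (x y : H) :
    ⟪A x, y⟫ = ⟪A y, x⟫ := by
  calc ⟪A x, y⟫ = ⟪x, A y⟫ := hA.isSymmetric x y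
    _ = ⟪A y, x⟫ := real_inner_comm _ _

lemma aux_polar (A : H →L[ℝ] H) (hA : IsSelfAdjoint A) (x y : H) :
    ⟪A (x+y), x+y⟫ - ⟪A (x-y), x-y⟫ = 4 * ⟪A x, y⟫ := by
  have h := aux_sym A hA x y
  simp only [map_add, map_sub, inner_add_left, inner_add_right, inner_sub_left, inner_sub_right]
  linarith

lemma aux_norm_le (A : H →L[ℝ] H) (hA : IsSelfAdjoint A) {c : ℝ} (hc : 0 ≤ c)
    (h : ∀ x : H, ‖x‖ = 1 → |⟪A x, x⟫| ≤ c) : ‖A‖ ≤ c := by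
  have hb : ∀ x : H, |⟪A x, x⟫| ≤ c * ‖x‖ ^ 2 := by
    intro x
    rcases eq_or_ne x 0 with rfl | hx
    · simp
    · have hn : ‖x‖ ≠ 0 := norm_ne_zero_iff.mpr hx
      have hu : ‖(‖x‖⁻¹ • x)‖ = 1 := by
        rw [norm_smul]; simp [abs_of_nonneg, hn]
      have := h (‖x‖⁻¹ • x) hu
      rw [map_smul, inner_smul_left, inner_smul_right] at this
      simp only [RCLike.star_def, conj_trivial] at this
      rw [abs_mul, abs_mul, abs_inv, abs_norm] at this
      have hx2 : (0:ℝ) < ‖x‖ ^ 2 := by positivity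
      calc |⟪A x, x⟫| = ‖x‖ ^ 2 * (‖x‖⁻¹ * (‖x‖⁻¹ * |⟪A x, x⟫|)) := by
            field_simp
        _ ≤ ‖x‖ ^ 2 * c := mul_le_mul_of_nonneg_left this (le_of_lt hx2)
        _ = c * ‖x‖ ^ 2 := by ring
  refine opNorm_le_bound A hc fun x => ?_
  rcases eq_or_ne (A x) 0 with h0 | h0
  · simp [h0]; positivity
  · have hx : x ≠ 0 := by rintro rfl; simp at h0
    have hxp : (0:ℝ) < ‖x‖ := norm_pos_iff.mpr hx
    set y : H := (‖x‖ / ‖A x‖) • A x with hy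
    have hAx : (0:ℝ) < ‖A x‖ := norm_pos_iff.mpr h0
    have hyn : ‖y‖ = ‖x‖ := by
      rw [hy, norm_smul, Real.norm_eq_abs, abs_of_nonneg (by positivity)]
      field_simp
    have hin : ⟪A x, y⟫ = ‖x‖ * ‖A x‖ := by
      rw [hy, inner_smul_right, real_inner_self_eq_norm_sq]
      field_simp
    have hpolar := aux_polar A hA x y
    have h1 := abs_le.mp (hb (x + y))
    have h2 := abs_le.mp (hb (x - y))
    have hpar : ‖x + y‖ ^ 2 + ‖x - y‖ ^ 2 = 2 * (‖x‖ ^ 2 + ‖y‖ ^ 2) := by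
      rw [@norm_add_sq_real, @norm_sub_sq_real]; ring
    have key : 4 * (‖x‖ * ‖A x‖) ≤ c * ‖x + y‖ ^ 2 + c * ‖x - y‖ ^ 2 := by
      rw [← hin, ← hpolar]; linarith [h1.2, h2.1]
    have hpar' : c * ‖x + y‖ ^ 2 + c * ‖x - y‖ ^ 2 = 4 * (c * ‖x‖ ^ 2) := by
      have : c * (‖x + y‖ ^ 2 + ‖x - y‖ ^ 2) = c * (2 * (‖x‖ ^ 2 + ‖y‖ ^ 2)) := by rw [hpar]
      rw [hyn] at this; linarith [this]
    refine le_of_mul_le_mul_left ?_ hxp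
    nlinarith [key, hpar']

/-- For bounded positive operators U, V: ‖U − V‖² ≤ ‖U² − V²‖. -/
theorem stmt_6 (U V : H →L[ℝ] H)
    (hU : IsSelfAdjoint U ∧ ∀ x : H, (0:ℝ) ≤ ⟪U x, x⟫)
    (hV : IsSelfAdjoint V ∧ ∀ x : H, (0:ℝ) ≤ ⟪V x, x⟫) :
    ‖U - V‖ ^ 2 ≤ ‖U ∘L U - V ∘L V‖ := by
  obtain ⟨hU1, hU2⟩ := hU
  obtain ⟨hV1, hV2⟩ := hV
  set A := U - V with hAdef
  set W := U + V with hWdef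
  set B := U ∘L U - V ∘L V with hBdef
  have hA : IsSelfAdjoint A := hU1.sub hV1
  set N := ‖A‖ with hNdef
  rcases (norm_nonneg A).eq_or_lt with hN0 | hN0
  · have hz : N = 0 := hN0.symm
    rw [hz]
    simp only [pow_two, mul_zero]; exact norm_nonneg B
  have step : ∀ ε ∈ Set.Ioo (0:ℝ) N,
      N ^ 2 ≤ ‖B‖ + 2 * N * ε + ‖W‖ * Real.sqrt (2 * N * ε) := by
    intro ε hε
    obtain ⟨hε0, hεN⟩ := hε
    have hex : ∃ x : H, ‖x‖ = 1 ∧ N - ε < |⟪A x, x⟫| := by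
      by_contra hcon
      push_neg at hcon
      have := aux_norm_le A hA (c := N - ε) (by linarith) hcon
      linarith
    obtain ⟨x, hx1, hxlam⟩ := hex
    set lam := ⟪A x, x⟫ with hlam
    have hAx : ‖A x‖ ≤ N := by
      calc ‖A x‖ ≤ N * ‖x‖ := A.le_opNorm x
        _ = N := by rw [hx1]; ring
    have hlamN : |lam| ≤ N := by
      calc |lam| ≤ ‖A x‖ * ‖x‖ := abs_real_inner_le_norm _ _
        _ ≤ N := by rw [hx1]; simpa using hAx
    have hlam2 : (N - ε) ^ 2 ≤ lam ^ 2 := by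
      nlinarith [le_of_lt hxlam, abs_nonneg lam, sq_abs lam]
    have happrox : ‖A x - lam • x‖ ^ 2 ≤ 2 * N * ε := by
      have e1 : ⟪A x, lam • x⟫ = lam ^ 2 := by
        rw [real_inner_smul_right, ← hlam]; ring
      have e2 : ‖lam • x‖ ^ 2 = lam ^ 2 := by
        rw [norm_smul, Real.norm_eq_abs, hx1, mul_one, sq_abs]
      have e3 : ‖A x - lam • x‖ ^ 2 = ‖A x‖ ^ 2 - lam ^ 2 := by
        rw [@norm_sub_sq_real, e1, e2]; ring
      nlinarith [hAx, norm_nonneg (A x)]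
    have hsqrt : ‖A x - lam • x‖ ≤ Real.sqrt (2 * N * ε) := by
      rw [Real.le_sqrt (norm_nonneg _) (by positivity)]
      exact happrox
    -- positivity of W relative to A
    have hWpos : |lam| ≤ ⟪W x, x⟫ := by
      have h1 : ⟪W x, x⟫ + lam = 2 * ⟪U x, x⟫ := by
        rw [hlam, hWdef, hAdef]
        simp only [add_apply, sub_apply, inner_add_left, inner_sub_left]
        ring
      have h2 : ⟪W x, x⟫ - lam = 2 * ⟪V x, x⟫ := by
        rw [hlam, hWdef, hAdef]
        simp only [add_apply, sub_apply, inner_add_left, inner_sub_left]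
        ring
      rcases abs_cases lam with ⟨he, _⟩ | ⟨he, _⟩ <;>
        [linarith [hV2 x, h2]; linarith [hU2 x, h1]]
    -- key identity
    have hBx : ⟪B x, x⟫ = ⟪A x, W x⟫ := by
      have e1 : ⟪U (U x), x⟫ = ⟪U x, U x⟫ := hU1.isSymmetric (U x) x
      have e2 : ⟪V (V x), x⟫ = ⟪V x, V x⟫ := hV1.isSymmetric (V x) x
      have e3 := real_inner_comm (U x) (V x)
      rw [hBdef, hAdef, hWdef]
      simp only [sub_apply, add_apply, comp_apply, inner_sub_left, inner_add_right]
      linarith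
    have hdecomp : ⟪A x, W x⟫ = lam * ⟪x, W x⟫ + ⟪A x - lam • x, W x⟫ := by
      rw [inner_sub_left, real_inner_smul_left]; ring
    have hWx : ‖W x‖ ≤ ‖W‖ := by
      calc ‖W x‖ ≤ ‖W‖ * ‖x‖ := W.le_opNorm x
        _ = ‖W‖ := by rw [hx1]; ring
    have hBb : |⟪B x, x⟫| ≤ ‖B‖ := by
      calc |⟪B x, x⟫| ≤ ‖B x‖ * ‖x‖ := abs_real_inner_le_norm _ _
        _ ≤ ‖B‖ := by
            rw [hx1, mul_one]
            calc ‖B x‖ ≤ ‖B‖ * ‖x‖ := B.le_opNorm x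
              _ = ‖B‖ := by rw [hx1]; ring
    have herr : |⟪A x - lam • x, W x⟫| ≤ Real.sqrt (2 * N * ε) * ‖W‖ := by
      calc |⟪A x - lam • x, W x⟫| ≤ ‖A x - lam • x‖ * ‖W x‖ := abs_real_inner_le_norm _ _
        _ ≤ Real.sqrt (2 * N * ε) * ‖W‖ :=
            mul_le_mul hsqrt hWx (norm_nonneg _) (Real.sqrt_nonneg _)
    have hmain : (N - ε) ^ 2 ≤ |lam * ⟪x, W x⟫| := by
      rw [abs_mul]
      have hWxx : |⟪x, W x⟫| = ⟪W x, x⟫ := by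
        rw [real_inner_comm]
        exact abs_of_nonneg (le_trans (abs_nonneg lam) hWpos)
      rw [hWxx]
      calc (N - ε) ^ 2 ≤ |lam| * |lam| := by nlinarith [hlam2, sq_abs lam]
        _ ≤ |lam| * ⟪W x, x⟫ := mul_le_mul_of_nonneg_left hWpos (abs_nonneg lam)
    have hfinal : (N - ε) ^ 2 ≤ ‖B‖ + Real.sqrt (2 * N * ε) * ‖W‖ := by
      have := abs_sub_abs_le_abs_sub (lam * ⟪x, W x⟫ + ⟪A x - lam • x, W x⟫) (⟪A x - lam • x, W x⟫)
      have hBA : |lam * ⟪x, W x⟫| ≤ |⟪A x, W x⟫| + |⟪A x - lam • x, W x⟫| := by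
        calc |lam * ⟪x, W x⟫| = |⟪A x, W x⟫ - ⟪A x - lam • x, W x⟫| := by
              rw [hdecomp]; ring_nf
          _ ≤ |⟪A x, W x⟫| + |⟪A x - lam • x, W x⟫| := abs_sub _ _
      rw [← hBx] at hBA
      linarith
    nlinarith [hfinal, hε0, hN0]
  -- take the limit ε → 0⁺
  have hlim : Filter.Tendsto (fun ε : ℝ => ‖B‖ + 2 * N * ε + ‖W‖ * Real.sqrt (2 * N * ε))
      (nhdsWithin 0 (Set.Ioi 0)) (nhds ‖B‖) := by
    have hc : Continuous (fun ε : ℝ => ‖B‖ + 2 * N * ε + ‖W‖ * Real.sqrt (2 * N * ε)) :=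
      (continuous_const.add (continuous_const.mul continuous_id)).add
        (continuous_const.mul (Real.continuous_sqrt.comp (continuous_const.mul continuous_id)))
    have := hc.tendsto 0
    simp only [mul_zero, Real.sqrt_zero, add_zero] at this
    exact this.mono_left nhdsWithin_le_nhds
  have hev : ∀ᶠ ε in nhdsWithin (0:ℝ) (Set.Ioi 0),
      N ^ 2 ≤ ‖B‖ + 2 * N * ε + ‖W‖ * Real.sqrt (2 * N * ε) := by
    filter_upwards [Ioo_mem_nhdsGT_of_mem (Set.mem_Ico.mpr ⟨le_refl 0, hN0⟩)] with ε hε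
    exact step ε hε
  exact ge_of_tendsto hlim hev
end

section
/- Let H be a real Hilbert space and A, B bounded linear operators on H. Then ‖|A| − |B|‖² ≤ (‖A‖ + ‖B‖)·‖A − B‖, where |T| = √(T*T). In particular, the map T ↦ |T| is continuous with respect to the operator norm. -/
set_option maxHeartbeats 1000000


open scoped RealInnerProductSpace
open ContinuousLinearMap

variable {H : Type*} [NormedAddCommGroup H] [InnerProductSpace ℝ H] [CompleteSpace H]

/-- A self-adjoint operator whose quadratic form is bounded by `c` on the unit
sphere has operator norm at most `c`. -/
lemma sa_norm_le_aux (D : H →L[ℝ] H) (hD : IsSelfAdjoint D) {c : ℝ} (hc : 0 ≤ c)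
    (h : ∀ x : H, ‖x‖ = 1 → |⟪D x, x⟫| ≤ c) : ‖D‖ ≤ c := by
  have hsym := hD.isSymmetric
  have h' : ∀ x : H, |⟪D x, x⟫| ≤ c * ‖x‖ ^ 2 := by
    intro x
    rcases eq_or_ne x 0 with rfl | hx
    · simp only [map_zero, inner_zero_left, abs_zero, norm_zero]
      positivity
    · have hxn : (0:ℝ) < ‖x‖ := norm_pos_iff.2 hx
      have hu : ‖(‖x‖⁻¹ • x)‖ = 1 := by
        rw [norm_smul, norm_inv, norm_norm]
        field_simp
      have := h (‖x‖⁻¹ • x) hu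
      rw [map_smul, real_inner_smul_left, real_inner_smul_right] at this
      rw [abs_mul, abs_mul, abs_inv, abs_norm] at this
      have h2 : ‖x‖⁻¹ * (‖x‖⁻¹ * |⟪D x, x⟫|) = |⟪D x, x⟫| / ‖x‖ ^ 2 := by
        rw [div_eq_mul_inv, pow_two, mul_inv]
        ring
      rw [h2, div_le_iff₀ (by positivity)] at this
      linarith [this]
  refine D.opNorm_le_bound hc fun x => ?_
  rcases eq_or_ne (D x) 0 with h0 | h0
  · rw [h0]; simp; positivity
  have hx : x ≠ 0 := by rintro rfl; simp at h0
  have hxn : (0:ℝ) < ‖x‖ := norm_pos_iff.2 hx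
  have hDxn : (0:ℝ) < ‖D x‖ := norm_pos_iff.2 h0
  set y := (‖x‖ / ‖D x‖) • D x with hy
  have hyn : ‖y‖ = ‖x‖ := by
    rw [hy, norm_smul, Real.norm_eq_abs, abs_of_nonneg (by positivity)]
    field_simp
  have h1 : ⟪D y, x⟫ = ⟪D x, y⟫ := by
    have := hsym y x
    simp only [ContinuousLinearMap.coe_coe] at this
    rw [this, real_inner_comm]
  have h2 : ⟪D x, y⟫ = ‖x‖ * ‖D x‖ := by
    rw [hy, real_inner_smul_right, real_inner_self_eq_norm_sq]
    field_simp
  have key : 4 * (‖x‖ * ‖D x‖) = ⟪D (x + y), x + y⟫ - ⟪D (x - y), x - y⟫ := by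
    simp only [map_add, map_sub, inner_add_left, inner_add_right, inner_sub_left,
      inner_sub_right]
    rw [h1, h2]
    ring
  have hpar : ‖x + y‖ * ‖x + y‖ + ‖x - y‖ * ‖x - y‖ = 2 * (‖x‖ * ‖x‖ + ‖y‖ * ‖y‖) :=
    by have h := parallelogram_law_with_norm ℝ x y; simp only [sq] at h; exact h
  have b1 : |⟪D (x + y), x + y⟫| ≤ c * ‖x + y‖ ^ 2 := h' (x + y)
  have b2 : |⟪D (x - y), x - y⟫| ≤ c * ‖x - y‖ ^ 2 := h' (x - y)
  have hmain : 4 * (‖x‖ * ‖D x‖) ≤ 4 * (c * ‖x‖ ^ 2) := by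
    rw [key]
    calc ⟪D (x + y), x + y⟫ - ⟪D (x - y), x - y⟫
        ≤ |⟪D (x + y), x + y⟫| + |⟪D (x - y), x - y⟫| := by
          have a1 := le_abs_self (⟪D (x + y), x + y⟫)
          have a2 := neg_abs_le (⟪D (x - y), x - y⟫)
          linarith
      _ ≤ c * ‖x + y‖ ^ 2 + c * ‖x - y‖ ^ 2 := add_le_add b1 b2
      _ = c * (‖x + y‖ * ‖x + y‖ + ‖x - y‖ * ‖x - y‖) := by ring
      _ = c * (2 * (‖x‖ * ‖x‖ + ‖y‖ * ‖y‖)) := by rw [hpar]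
      _ = 4 * (c * ‖x‖ ^ 2) := by rw [hyn]; ring
  nlinarith [hmain, hxn]

/-- Key pointwise estimate: for self-adjoint `S` with `T` positive, and a unit vector `x`
with `⟪(S-T)x, x⟫ ≥ 0`, we have
`⟪(S-T)x,x⟫² ≤ ‖S²−T²‖ + (‖S‖+‖T‖)·√(‖S−T‖² − ⟪(S-T)x,x⟫²)`. -/
lemma key_ineq_aux (S T : H →L[ℝ] H) (hS : IsSelfAdjoint S) (hT : IsSelfAdjoint T)
    (hT0 : ∀ x : H, (0:ℝ) ≤ ⟪T x, x⟫) (x : H) (hx : ‖x‖ = 1)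
    (hμ : 0 ≤ ⟪(S - T) x, x⟫) :
    ⟪(S - T) x, x⟫ ^ 2 ≤ ‖S ∘L S - T ∘L T‖
      + (‖S‖ + ‖T‖) * Real.sqrt (‖S - T‖ ^ 2 - ⟪(S - T) x, x⟫ ^ 2) := by
  have hsymS := hS.isSymmetric
  have hsymT := hT.isSymmetric
  set D := S - T with hD
  set μ := ⟪D x, x⟫ with hμdef
  set r := D x - μ • x with hr
  have hDx : D x = S x - T x := by rw [hD]; simp
  -- norm of the residual
  have hnr2 : ‖r‖ ^ 2 = ‖D x‖ ^ 2 - μ ^ 2 := by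
    rw [hr, @norm_sub_sq_real, real_inner_smul_right, norm_smul, Real.norm_eq_abs]
    rw [hx]
    rw [← hμdef]
    rw [mul_pow, sq_abs]
    ring
  have hDxle : ‖D x‖ ≤ ‖D‖ := by
    have := D.le_opNorm x
    rwa [hx, mul_one] at this
  have hr2le : ‖r‖ ^ 2 ≤ ‖D‖ ^ 2 - μ ^ 2 := by
    rw [hnr2]
    have : ‖D x‖ ^ 2 ≤ ‖D‖ ^ 2 := by
      apply pow_le_pow_left₀ (norm_nonneg _) hDxle
    linarith
  have hrle : ‖r‖ ≤ Real.sqrt (‖D‖ ^ 2 - μ ^ 2) := by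
    rw [Real.le_sqrt (norm_nonneg r)]
    · exact hr2le
    · nlinarith [sq_nonneg ‖r‖]
  -- the factorization identity
  have e2 : S x - T x = μ • x + r := by rw [hr, hDx]; abel
  have hfact : μ * (⟪S x, x⟫ + ⟪T x, x⟫) + ⟪S x + T x, r⟫
      = ⟪(S ∘L S - T ∘L T) x, x⟫ := by
    have e1 : ⟪(S ∘L S - T ∘L T) x, x⟫ = ⟪S x + T x, S x - T x⟫ := by
      simp only [ContinuousLinearMap.sub_apply, ContinuousLinearMap.comp_apply,
        inner_sub_left, inner_add_left, inner_sub_right]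
      have hs := hsymS (S x) x
      have ht := hsymT (T x) x
      simp only [ContinuousLinearMap.coe_coe] at hs ht
      rw [hs, ht, real_inner_comm (T x) (S x)]
      ring
    rw [e1, e2, inner_add_right, real_inner_smul_right]
    simp only [inner_add_left]
    try ring
  -- bounds
  have h1 : μ * μ ≤ μ * (⟪S x, x⟫ + ⟪T x, x⟫) := by
    have hμeq : μ = ⟪S x, x⟫ - ⟪T x, x⟫ := by
      rw [hμdef, hDx, inner_sub_left]
    nlinarith [hT0 x, hμ]
  have hst : ‖S x + T x‖ ≤ ‖S‖ + ‖T‖ := by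
    calc ‖S x + T x‖ ≤ ‖S x‖ + ‖T x‖ := norm_add_le _ _
      _ ≤ ‖S‖ * ‖x‖ + ‖T‖ * ‖x‖ := add_le_add (S.le_opNorm x) (T.le_opNorm x)
      _ = ‖S‖ + ‖T‖ := by rw [hx]; ring
  have h2 : -((‖S‖ + ‖T‖) * ‖r‖) ≤ ⟪S x + T x, r⟫ := by
    have habs : |⟪S x + T x, r⟫| ≤ ‖S x + T x‖ * ‖r‖ := abs_real_inner_le_norm _ _
    nlinarith [norm_nonneg r, neg_abs_le (⟪S x + T x, r⟫)]
  have h3 : ⟪(S ∘L S - T ∘L T) x, x⟫ ≤ ‖S ∘L S - T ∘L T‖ := by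
    calc ⟪(S ∘L S - T ∘L T) x, x⟫ ≤ ‖(S ∘L S - T ∘L T) x‖ * ‖x‖ := real_inner_le_norm _ _
      _ ≤ ‖S ∘L S - T ∘L T‖ * ‖x‖ * ‖x‖ := by
          gcongr
          exact (S ∘L S - T ∘L T).le_opNorm x
      _ = ‖S ∘L S - T ∘L T‖ := by rw [hx]; ring
  have hCnn : (0:ℝ) ≤ ‖S‖ + ‖T‖ := by positivity
  have h4 : (‖S‖ + ‖T‖) * ‖r‖ ≤ (‖S‖ + ‖T‖) * Real.sqrt (‖D‖ ^ 2 - μ ^ 2) :=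
    mul_le_mul_of_nonneg_left hrle hCnn
  have : μ ^ 2 ≤ ‖S ∘L S - T ∘L T‖ + (‖S‖ + ‖T‖) * Real.sqrt (‖D‖ ^ 2 - μ ^ 2) := by
    nlinarith [hfact, h1, h2, h3, h4]
  exact this

/-- ‖|A| − |B|‖² ≤ (‖A‖ + ‖B‖)·‖A − B‖ for bounded operators A, B,
where |T| denotes the positive square root of T*T. -/
theorem stmt_7 (A B absA absB : H →L[ℝ] H)
    (habsA_pos : IsSelfAdjoint absA ∧ ∀ x : H, (0:ℝ) ≤ ⟪absA x, x⟫)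
    (habsA_sq : absA ∘L absA = ContinuousLinearMap.adjoint A ∘L A)
    (habsB_pos : IsSelfAdjoint absB ∧ ∀ x : H, (0:ℝ) ≤ ⟪absB x, x⟫)
    (habsB_sq : absB ∘L absB = ContinuousLinearMap.adjoint B ∘L B) :
    ‖absA - absB‖ ^ 2 ≤ (‖A‖ + ‖B‖) * ‖A - B‖ := by
  obtain ⟨hSsa, hS0⟩ := habsA_pos
  obtain ⟨hTsa, hT0⟩ := habsB_pos
  set S := absA with hSdef
  set T := absB with hTdef
  set D := S - T with hDdef
  set N := ‖S ∘L S - T ∘L T‖ with hNdef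
  set C := ‖S‖ + ‖T‖ with hCdef
  set M := ‖D‖ with hMdef
  have hDsa : IsSelfAdjoint D := hSsa.sub hTsa
  have hCnn : (0:ℝ) ≤ C := by rw [hCdef]; positivity
  have hNnn : (0:ℝ) ≤ N := norm_nonneg _
  have hMnn : (0:ℝ) ≤ M := norm_nonneg _
  -- step A: ‖S² - T²‖ ≤ (‖A‖+‖B‖)‖A-B‖
  have hNle : N ≤ (‖A‖ + ‖B‖) * ‖A - B‖ := by
    have hadj : ContinuousLinearMap.adjoint (A - B)
        = ContinuousLinearMap.adjoint A - ContinuousLinearMap.adjoint B := map_sub _ _ _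
    have hfac : S ∘L S - T ∘L T
        = (ContinuousLinearMap.adjoint A) ∘L (A - B)
          + (ContinuousLinearMap.adjoint (A - B)) ∘L B := by
      rw [habsA_sq, habsB_sq, hadj]
      ext v
      simp only [ContinuousLinearMap.sub_apply, ContinuousLinearMap.comp_apply,
        ContinuousLinearMap.add_apply, map_sub]
      abel
    rw [hNdef, hfac]
    have hnA : ‖ContinuousLinearMap.adjoint A‖ = ‖A‖ :=
      LinearIsometryEquiv.norm_map ContinuousLinearMap.adjoint A
    have hnAB : ‖ContinuousLinearMap.adjoint (A - B)‖ = ‖A - B‖ :=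
      LinearIsometryEquiv.norm_map ContinuousLinearMap.adjoint (A - B)
    calc ‖(ContinuousLinearMap.adjoint A) ∘L (A - B)
          + (ContinuousLinearMap.adjoint (A - B)) ∘L B‖
        ≤ ‖(ContinuousLinearMap.adjoint A) ∘L (A - B)‖
          + ‖(ContinuousLinearMap.adjoint (A - B)) ∘L B‖ := norm_add_le _ _
      _ ≤ ‖ContinuousLinearMap.adjoint A‖ * ‖A - B‖
          + ‖ContinuousLinearMap.adjoint (A - B)‖ * ‖B‖ :=
          add_le_add (opNorm_comp_le _ _) (opNorm_comp_le _ _)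
      _ = (‖A‖ + ‖B‖) * ‖A - B‖ := by rw [hnA, hnAB]; ring
  -- combined pointwise bound handling both signs
  have hbound : ∀ x : H, ‖x‖ = 1 →
      ⟪D x, x⟫ ^ 2 ≤ N + C * Real.sqrt (M ^ 2 - ⟪D x, x⟫ ^ 2) := by
    intro x hx
    rcases le_or_gt 0 (⟪D x, x⟫) with hpos | hneg
    · exact key_ineq_aux S T hSsa hTsa hT0 x hx hpos
    · have hpos' : 0 ≤ ⟪(T - S) x, x⟫ := by
        have : (T - S) x = -(D x) := by
          rw [hDdef]; simp only [ContinuousLinearMap.sub_apply]; abel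
        rw [this, inner_neg_left]
        linarith
      have hkey := key_ineq_aux T S hTsa hSsa hS0 x hx hpos'
      have e1 : ⟪(T - S) x, x⟫ = -⟪D x, x⟫ := by
        have : (T - S) x = -(D x) := by
          rw [hDdef]; simp only [ContinuousLinearMap.sub_apply]; abel
        rw [this, inner_neg_left]
      have e2 : ‖T ∘L T - S ∘L S‖ = N := by
        rw [hNdef, ← norm_neg, neg_sub]
      have e3 : ‖T - S‖ = M := by
        rw [hMdef, hDdef, norm_sub_rev]
      rw [e1, e2, e3] at hkey
      have e4 : (-⟪D x, x⟫) ^ 2 = ⟪D x, x⟫ ^ 2 := by ring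
      rw [e4] at hkey
      calc ⟪D x, x⟫ ^ 2 ≤ N + (‖T‖ + ‖S‖) * Real.sqrt (M ^ 2 - ⟪D x, x⟫ ^ 2) := hkey
        _ = N + C * Real.sqrt (M ^ 2 - ⟪D x, x⟫ ^ 2) := by rw [hCdef]; ring
  -- step B: M² ≤ N, by an ε-argument
  have hM2N : M ^ 2 ≤ N := by
    refine le_of_forall_pos_le_add fun δ hδ => ?_
    by_contra hcon
    push_neg at hcon
    have hM0 : 0 < M := by
      rcases hMnn.lt_or_eq with h | h
      · exact h
      · exfalso; rw [← h] at hcon; simp at hcon; nlinarith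
    set t0 := δ / (M + C) with ht0def
    have hMC : 0 < M + C := by linarith
    have ht0 : 0 < t0 := div_pos hδ hMC
    have hc : ∀ x : H, ‖x‖ = 1 → |⟪D x, x⟫| ≤ Real.sqrt (M ^ 2 - t0 ^ 2) := by
      intro x hx
      have hb := hbound x hx
      set μ := ⟪D x, x⟫ with hμdef
      have hμM : μ ^ 2 ≤ M ^ 2 := by
        have h1 : |μ| ≤ ‖D x‖ * ‖x‖ := abs_real_inner_le_norm _ _
        have h2 : ‖D x‖ ≤ M := by
          have := D.le_opNorm x
          rwa [hx, mul_one] at this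
        rw [hx, mul_one] at h1
        nlinarith [abs_nonneg μ, sq_abs μ]
      set t := Real.sqrt (M ^ 2 - μ ^ 2) with htdef
      have htnn : 0 ≤ t := Real.sqrt_nonneg _
      have ht2 : t ^ 2 = M ^ 2 - μ ^ 2 := Real.sq_sqrt (by linarith)
      have htM : t ≤ M := by
        nlinarith [sq_nonneg (t - M), sq_nonneg μ]
      have hδt : δ < (M + C) * t := by nlinarith [hb]
      have ht0t : t0 < t := by
        rw [ht0def, div_lt_iff₀ hMC]
        linarith [hδt]
      have hμ2 : μ ^ 2 ≤ M ^ 2 - t0 ^ 2 := by nlinarith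
      apply Real.le_sqrt_of_sq_le
      rw [sq_abs]
      exact hμ2
    have hle := sa_norm_le_aux D hDsa (Real.sqrt_nonneg _) hc
    have hlt : Real.sqrt (M ^ 2 - t0 ^ 2) < M := by
      rw [Real.sqrt_lt' hM0]
      nlinarith
    rw [← hMdef] at hle
    linarith
  calc M ^ 2 ≤ N := hM2N
    _ ≤ (‖A‖ + ‖B‖) * ‖A - B‖ := hNle
end

section
/- Let V, V^δ be bounded self-adjoint operators on a real Hilbert space H with ‖V^δ − V‖ ≤ δ, let V be positive, and let S be a bounded self-adjoint operator such that V + βS ≥ 0 in the quadratic sense for some β ≥ 0. Then |V^δ| + βS ≥ −δI in the quadratic sense, where |V^δ| = √((V^δ)*V^δ). -/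
open scoped RealInnerProductSpace
open ContinuousLinearMap

set_option maxHeartbeats 1000000
set_option synthInstance.maxHeartbeats 400000

variable {H : Type*} [NormedAddCommGroup H] [InnerProductSpace ℝ H] [CompleteSpace H]

private lemma inner_symm' {T : H →L[ℝ] H} (hT : IsSelfAdjoint T) (x y : H) :
    ⟪T x, y⟫ = ⟪x, T y⟫ := hT.isSymmetric x y

/-- Product of commuting positive operators is positive (in the quadratic-form sense).
Proved by the Riesz–Nagy iteration `t ↦ t - t²`. -/
private lemma cp_aux {P Q : H →L[ℝ] H} (hP : IsSelfAdjoint P) (hPpos : ∀ x, 0 ≤ ⟪P x, x⟫)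
    (hQ : IsSelfAdjoint Q) (hQpos : ∀ x, 0 ≤ ⟪Q x, x⟫) (hcomm : P * Q = Q * P) (x : H) :
    0 ≤ ⟪P (Q x), x⟫ := by
  by_cases hP0 : P = 0
  · simp [hP0]
  have hc : 0 < ‖P‖ := norm_pos_iff.mpr hP0
  set c : ℝ := ‖P‖ with hcdef
  set f : (H →L[ℝ] H) → (H →L[ℝ] H) := fun t => t - t * t with hf
  set T : ℕ → H →L[ℝ] H := fun n => f^[n] (c⁻¹ • P) with hT
  have hT0 : T 0 = c⁻¹ • P := by simp [hT]
  have hTsucc : ∀ n, T (n + 1) = T n - T n * T n := by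
    intro n
    simp only [hT, Function.iterate_succ_apply', hf]
  have key : ∀ n, IsSelfAdjoint (T n) ∧ (∀ y, 0 ≤ ⟪T n y, y⟫) ∧
      (∀ y, ⟪T n y, y⟫ ≤ ‖y‖ ^ 2) ∧ T n * Q = Q * T n := by
    intro n
    induction n with
    | zero =>
      refine ⟨?_, ?_, ?_, ?_⟩
      · rw [hT0]
        have st : IsSelfAdjoint (c⁻¹ : ℝ) := star_trivial _
        exact IsSelfAdjoint.smul st hP
      · intro y
        rw [hT0]
        simp only [ContinuousLinearMap.smul_apply]
        rw [real_inner_smul_left]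
        exact mul_nonneg (inv_nonneg.mpr hc.le) (hPpos y)
      · intro y
        rw [hT0]
        simp only [ContinuousLinearMap.smul_apply]
        rw [real_inner_smul_left]
        have h1 : ⟪P y, y⟫ ≤ c * ‖y‖ ^ 2 := by
          have h2 : ⟪P y, y⟫ ≤ ‖P y‖ * ‖y‖ := real_inner_le_norm _ _
          have h3 := P.le_opNorm y
          nlinarith [norm_nonneg y]
        have h4 : c⁻¹ * ⟪P y, y⟫ ≤ c⁻¹ * (c * ‖y‖ ^ 2) :=
          mul_le_mul_of_nonneg_left h1 (inv_nonneg.mpr hc.le)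
        calc c⁻¹ * ⟪P y, y⟫ ≤ c⁻¹ * (c * ‖y‖ ^ 2) := h4
          _ = ‖y‖ ^ 2 := by field_simp
      · rw [hT0, smul_mul_assoc, hcomm, mul_smul_comm]
    | succ n ih =>
      obtain ⟨hsa, hpos, hub, hq⟩ := ih
      rw [hTsucc n]
      set t := T n with htdef
      have hubform : ∀ y, 0 ≤ ⟪(1 - t) y, y⟫ := by
        intro y
        simp only [ContinuousLinearMap.sub_apply, ContinuousLinearMap.one_apply]
        rw [inner_sub_left, real_inner_self_eq_norm_sq]
        linarith [hub y]
      have hsub : IsSelfAdjoint (1 - t) := (IsSelfAdjoint.one (H →L[ℝ] H)).sub hsa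
      refine ⟨?_, ?_, ?_, ?_⟩
      · show star (t - t * t) = t - t * t
        rw [star_sub, star_mul, hsa.star_eq]
      · intro y
        have hid : t - t * t = (1 - t) * t * (1 - t) + t * (1 - t) * t := by noncomm_ring
        rw [hid]
        simp only [ContinuousLinearMap.add_apply, ContinuousLinearMap.mul_apply]
        rw [inner_add_left]
        have h1 : ⟪(1 - t) (t ((1 - t) y)), y⟫ = ⟪t ((1 - t) y), (1 - t) y⟫ :=
          inner_symm' hsub _ _
        have h2 : ⟪t ((1 - t) (t y)), y⟫ = ⟪(1 - t) (t y), t y⟫ := inner_symm' hsa _ _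
        rw [h1, h2]
        exact add_nonneg (hpos _) (hubform _)
      · intro y
        simp only [ContinuousLinearMap.sub_apply, ContinuousLinearMap.mul_apply]
        rw [inner_sub_left, inner_symm' hsa (t y) y]
        have h3 : (0:ℝ) ≤ ⟪t y, t y⟫ := real_inner_self_nonneg
        linarith [hub y]
      · rw [sub_mul, mul_sub, hq, mul_assoc, hq, ← mul_assoc, hq, mul_assoc]
  -- the vectors `T n x` become small
  have hsmall : ∀ ε : ℝ, 0 < ε → ∃ n, ‖T n x‖ ^ 2 < ε := by
    intro ε hε
    by_contra hcon
    push_neg at hcon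
    have hdec : ∀ n : ℕ, ⟪T n x, x⟫ ≤ ⟪T 0 x, x⟫ - n * ε := by
      intro n
      induction n with
      | zero => simp
      | succ n ih =>
        have hstep : ⟪T (n+1) x, x⟫ = ⟪T n x, x⟫ - ‖T n x‖ ^ 2 := by
          rw [hTsucc n]
          simp only [ContinuousLinearMap.sub_apply, ContinuousLinearMap.mul_apply]
          rw [inner_sub_left, inner_symm' (key n).1 (T n x) x, real_inner_self_eq_norm_sq]
        rw [hstep]
        have hcn := hcon n
        push_cast
        linarith
    obtain ⟨n, hn⟩ := exists_nat_gt (⟪T 0 x, x⟫ / ε)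
    have h1 := hdec n
    have h2 := (key n).2.1 x
    rw [div_lt_iff₀ hε] at hn
    linarith
  -- monotonicity of the mixed form
  have hmix : ∀ n, ⟪T n (Q x), x⟫ ≤ ⟪T 0 (Q x), x⟫ := by
    intro n
    induction n with
    | zero => exact le_refl _
    | succ n ih =>
      have hstep : ⟪T (n+1) (Q x), x⟫ = ⟪T n (Q x), x⟫ - ⟪Q (T n x), T n x⟫ := by
        rw [hTsucc n]
        simp only [ContinuousLinearMap.sub_apply, ContinuousLinearMap.mul_apply]
        rw [inner_sub_left]
        have hcm : T n * (T n * Q) = T n * (Q * T n) := by rw [(key n).2.2.2]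
        have e5 : T n (T n (Q x)) = T n (Q (T n x)) := by
          have h6 := congrArg (fun (g : H →L[ℝ] H) => g x) hcm
          simpa [ContinuousLinearMap.mul_apply] using h6
        rw [e5, inner_symm' (key n).1 (Q (T n x)) x]
      rw [hstep]
      have := hQpos (T n x)
      linarith
  -- conclude nonnegativity of the `T 0` mixed form
  have h0 : 0 ≤ ⟪T 0 (Q x), x⟫ := by
    by_contra hneg
    push_neg at hneg
    set d : ℝ := -⟪T 0 (Q x), x⟫ with hd
    have hdpos : 0 < d := by rw [hd]; linarith
    have hQx : (0:ℝ) ≤ ‖Q x‖ := norm_nonneg _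
    have hr : 0 < d / (‖Q x‖ + 1) := by positivity
    obtain ⟨n, hn⟩ := hsmall ((d / (‖Q x‖ + 1)) ^ 2) (by positivity)
    have hTn : ‖T n x‖ < d / (‖Q x‖ + 1) := by
      by_contra hcon2
      push_neg at hcon2
      have := pow_le_pow_left₀ hr.le hcon2 2
      linarith
    have hb : -(‖Q x‖ * ‖T n x‖) ≤ ⟪T n (Q x), x⟫ := by
      rw [inner_symm' (key n).1 (Q x) x]
      have h7 := abs_real_inner_le_norm (Q x) (T n x)
      have h8 := neg_abs_le (⟪Q x, T n x⟫ : ℝ)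
      linarith
    have hlt : ‖Q x‖ * ‖T n x‖ < d := by
      have h9 : ‖Q x‖ * ‖T n x‖ ≤ (‖Q x‖ + 1) * ‖T n x‖ := by
        nlinarith [norm_nonneg (T n x)]
      have h10 : (‖Q x‖ + 1) * ‖T n x‖ < (‖Q x‖ + 1) * (d / (‖Q x‖ + 1)) :=
        mul_lt_mul_of_pos_left hTn (by linarith)
      have h11 : (‖Q x‖ + 1) * (d / (‖Q x‖ + 1)) = d := by field_simp
      linarith
    have hT0v : ⟪T 0 (Q x), x⟫ = -d := by rw [hd]; ring
    linarith [hmix n, hb, hlt, hT0v]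
  -- scale back
  have hPc : P = c • T 0 := by
    rw [hT0, smul_smul, mul_inv_cancel₀ (ne_of_gt hc), one_smul]
  calc (0:ℝ) ≤ c * ⟪T 0 (Q x), x⟫ := mul_nonneg hc.le h0
    _ = ⟪P (Q x), x⟫ := by
        conv_rhs => rw [hPc]
        simp only [ContinuousLinearMap.smul_apply]
        rw [real_inner_smul_left]

/-- If the cube of a self-adjoint operator is positive in the form sense, so is the operator. -/
private lemma cube_nonneg {N : H →L[ℝ] H} (hN : IsSelfAdjoint N)
    (h3 : ∀ y : H, 0 ≤ ⟪N (N (N y)), y⟫) (x : H) : 0 ≤ ⟪N x, x⟫ := by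
  set K : Submodule ℝ H := LinearMap.ker (N : H →ₗ[ℝ] H) with hK
  have hKclosed : IsClosed (K : Set H) := ContinuousLinearMap.isClosed_ker N
  have : CompleteSpace K := hKclosed.completeSpace_coe
  have hrange : (LinearMap.range (N : H →ₗ[ℝ] H))ᗮ ≤ K := by
    intro y hy
    have hzero : ∀ z : H, ⟪N z, y⟫ = 0 := fun z => hy (N z) ⟨z, rfl⟩
    have h1 : ⟪N y, N y⟫ = 0 := by
      rw [inner_symm' hN y (N y), real_inner_comm]
      exact hzero (N y)
    exact LinearMap.mem_ker.mpr (inner_self_eq_zero.mp h1)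
  have horth : Kᗮ ≤ (LinearMap.range (N : H →ₗ[ℝ] H)).topologicalClosure := by
    have h1 : Kᗮ ≤ (LinearMap.range (N : H →ₗ[ℝ] H))ᗮᗮ := Submodule.orthogonal_le hrange
    rwa [Submodule.orthogonal_orthogonal_eq_closure] at h1
  obtain ⟨u, hu, v, hv, rfl⟩ := K.exists_add_mem_mem_orthogonal x
  have hNu : N u = 0 := LinearMap.mem_ker.mp hu
  have hcross : ⟪N v, u⟫ = 0 := by
    rw [inner_symm' hN v u, real_inner_comm, hNu]
    simp
  have hform : ⟪N (u + v), u + v⟫ = ⟪N v, v⟫ := by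
    rw [map_add, hNu, zero_add, inner_add_right, hcross, zero_add]
  rw [hform]
  have hvc : v ∈ closure ((LinearMap.range (N : H →ₗ[ℝ] H)) : Set H) := by
    have h2 := horth hv
    rwa [← Submodule.topologicalClosure_coe, SetLike.mem_coe]
  have hCclosed : IsClosed {y : H | 0 ≤ ⟪N y, y⟫} := by
    have hcont : Continuous fun y : H => (⟪N y, y⟫ : ℝ) :=
      Continuous.inner N.continuous continuous_id
    exact isClosed_le continuous_const hcont
  have hsubC : ((LinearMap.range (N : H →ₗ[ℝ] H)) : Set H) ⊆ {y : H | 0 ≤ ⟪N y, y⟫} := by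
    rintro _ ⟨z, rfl⟩
    show (0:ℝ) ≤ ⟪N (N z), N z⟫
    rw [inner_symm' hN (N z) (N z), real_inner_comm, ← inner_symm' hN (N (N z)) z]
    exact h3 z
  exact (hCclosed.closure_subset_iff.mpr hsubC) hvc

/-- Key comparison: if `A ≥ 0` is self-adjoint, `B` self-adjoint and `A² = B²`,
then `B ≤ A` in the quadratic-form sense. -/
private lemma abs_ge {A B : H →L[ℝ] H} (hA : IsSelfAdjoint A) (hApos : ∀ x, 0 ≤ ⟪A x, x⟫)
    (hB : IsSelfAdjoint B) (hsq : A * A = B * B) (x : H) : ⟪B x, x⟫ ≤ ⟪A x, x⟫ := by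
  set N : H →L[ℝ] H := A - B with hNdef
  have hNsa : IsSelfAdjoint N := hA.sub hB
  -- N² = A N + N A
  have g1 : (A * N + N * A) - N * N = A * A - B * B := by rw [hNdef]; noncomm_ring
  rw [hsq, sub_self] at g1
  have hNN : N * N = A * N + N * A := (sub_eq_zero.mp g1).symm
  -- A commutes with N²
  have f1 : B * (A * A) - (A * A) * B = 0 := by rw [hsq]; noncomm_ring
  have f2 : A * (B * B) - (B * B) * A = 0 := by rw [← hsq]; noncomm_ring
  have e2 : A * (N * N) - (N * N) * A =
      (B * (A * A) - (A * A) * B) + (A * (B * B) - (B * B) * A) := by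
    rw [hNdef]; noncomm_ring
  rw [f1, f2, add_zero] at e2
  have hAN : A * (N * N) = (N * N) * A := sub_eq_zero.mp e2
  -- N² is selfadjoint and positive
  have hQsa : IsSelfAdjoint (N * N) := by
    show star (N * N) = N * N
    rw [star_mul, hNsa.star_eq]
  have hQpos : ∀ z, 0 ≤ ⟪(N * N) z, z⟫ := by
    intro z
    show (0:ℝ) ≤ ⟪N (N z), z⟫
    rw [inner_symm' hNsa (N z) z]
    exact real_inner_self_nonneg
  -- cube positivity
  have h3 : ∀ y : H, 0 ≤ ⟪N (N (N y)), y⟫ := by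
    intro y
    have hdecomp : N * (N * N) = N * (A * N) + (N * N) * A := by
      conv_lhs => rw [hNN]
      noncomm_ring
    have happ : N (N (N y)) = N (A (N y)) + N (N (A y)) := by
      have h6 := congrArg (fun (g : H →L[ℝ] H) => g y) hdecomp
      simpa [ContinuousLinearMap.mul_apply] using h6
    rw [happ, inner_add_left]
    have t1 : ⟪N (A (N y)), y⟫ = ⟪A (N y), N y⟫ := inner_symm' hNsa (A (N y)) y
    have t2 : ⟪N (N (A y)), y⟫ = ⟪A (N (N y)), y⟫ := by
      have h7 := congrArg (fun (g : H →L[ℝ] H) => g y) hAN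
      simp only [ContinuousLinearMap.mul_apply] at h7
      rw [← h7]
    rw [t1, t2]
    have hcp := cp_aux hA hApos hQsa hQpos hAN y
    have hcp' : (0:ℝ) ≤ ⟪A (N (N y)), y⟫ := by
      simpa [ContinuousLinearMap.mul_apply] using hcp
    exact add_nonneg (hApos (N y)) hcp'
  have hfin := cube_nonneg hNsa h3 x
  have hNx : N x = A x - B x := rfl
  rw [hNx, inner_sub_left] at hfin
  linarith

/-- If V is positive, ‖V^δ − V‖ ≤ δ, S is self-adjoint and V + βS ≥ 0 for some
β ≥ 0, then |V^δ| + βS ≥ −δ·I in the quadratic sense. -/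
theorem stmt_12 (V Vd S absVd : H →L[ℝ] H)
    (hV : IsSelfAdjoint V ∧ ∀ x : H, (0:ℝ) ≤ ⟪V x, x⟫)
    (hVd : IsSelfAdjoint Vd)
    (hS : IsSelfAdjoint S)
    (δ : ℝ) (hδ : 0 ≤ δ) (hnoise : ‖Vd - V‖ ≤ δ)
    (β : ℝ) (hβ : 0 ≤ β)
    (hmono : ∀ g : H, (0:ℝ) ≤ ⟪(V + β • S) g, g⟫)
    (habs_pos : IsSelfAdjoint absVd ∧ ∀ x : H, (0:ℝ) ≤ ⟪absVd x, x⟫)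
    (habs_sq : absVd ∘L absVd = ContinuousLinearMap.adjoint Vd ∘L Vd) :
    ∀ g : H, -δ * ‖g‖ ^ 2 ≤ ⟪(absVd + β • S) g, g⟫ := by
  intro g
  have hAeq : absVd * absVd = Vd * Vd := by
    rw [ContinuousLinearMap.mul_def, ContinuousLinearMap.mul_def, habs_sq, hVd.adjoint_eq]
  have hkey : ⟪Vd g, g⟫ ≤ ⟪absVd g, g⟫ := abs_ge habs_pos.1 habs_pos.2 hVd hAeq g
  have hnm : |⟪(Vd - V) g, g⟫| ≤ δ * ‖g‖ ^ 2 := by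
    have h1 : |⟪(Vd - V) g, g⟫| ≤ ‖(Vd - V) g‖ * ‖g‖ := abs_real_inner_le_norm _ _
    have h2 := (Vd - V).le_opNorm g
    nlinarith [norm_nonneg g, norm_nonneg ((Vd - V) g), sq_nonneg ‖g‖]
  have hVdV : ⟪(Vd - V) g, g⟫ = ⟪Vd g, g⟫ - ⟪V g, g⟫ := by
    rw [ContinuousLinearMap.sub_apply, inner_sub_left]
  have hm' : 0 ≤ ⟪V g, g⟫ + β * ⟪S g, g⟫ := by
    have hm := hmono g
    rwa [ContinuousLinearMap.add_apply, ContinuousLinearMap.smul_apply, inner_add_left,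
      real_inner_smul_left] at hm
  have hgoal : ⟪(absVd + β • S) g, g⟫ = ⟪absVd g, g⟫ + β * ⟪S g, g⟫ := by
    rw [ContinuousLinearMap.add_apply, ContinuousLinearMap.smul_apply, inner_add_left,
      real_inner_smul_left]
  rw [hgoal]
  have habs' := abs_le.mp hnm
  linarith [habs'.1, hkey, hm', hVdV]
end
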